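/- Let N ≥ 1. There is a unique formal power series f(z) ∈ ℚ[[z]] with f(0) = 1 satisfying f(z)^N - f(z)^{N+1} + z = 0, and it satisfies f(-z)^N = 1 - Σ_{d≥1} (N/d) C((N+1)(d-1), d-1) z^d. -/

import Mathlib

open PowerSeries Finset

lemma coeff_natCast_mul (k n : ℕ) (f : ℚ⟦X⟧) :
    PowerSeries.coeff n ((k : ℚ⟦X⟧) * f) = k * PowerSeries.coeff n f := by
  rw [← map_natCast (PowerSeries.C (R := ℚ)) k, coeff_C_mul]

lemma pascal_step (M : ℕ) :
    (1 - X : ℚ⟦X⟧) * PowerSeries.mk (fun j => ((M + 1 + j).choose j : ℚ))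
      = PowerSeries.mk (fun j => ((M + j).choose j : ℚ)) := by
  ext n
  cases n with
  | zero => simp
  | succ n =>
    rw [sub_mul, one_mul, map_sub, coeff_succ_X_mul]
    simp only [coeff_mk]
    have e1 : M + 1 + (n + 1) = (M + n + 1) + 1 := by omega
    have e2 : M + 1 + n = M + n + 1 := by omega
    have e3 : M + (n + 1) = M + n + 1 := by omega
    rw [e1, e2, e3, Nat.choose_succ_succ]
    push_cast
    ring

lemma geom_inv (M : ℕ) :
    ((1 - X : ℚ⟦X⟧)) ^ (M + 1) * PowerSeries.mk (fun j => ((M + j).choose j : ℚ)) = 1 := by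
  induction M with
  | zero =>
    rw [zero_add, pow_one]
    ext n
    cases n with
    | zero => simp
    | succ n =>
      rw [sub_mul, one_mul, map_sub, coeff_succ_X_mul]
      simp [coeff_mk, Nat.choose_self]
  | succ M ih =>
    calc ((1 - X : ℚ⟦X⟧)) ^ (M + 1 + 1) * PowerSeries.mk (fun j => ((M + 1 + j).choose j : ℚ))
        = ((1 - X : ℚ⟦X⟧)) ^ (M + 1) * ((1 - X) * PowerSeries.mk (fun j => ((M + 1 + j).choose j : ℚ))) := by ring
      _ = 1 := by rw [pascal_step, ih]

lemma residue (N : ℕ) (w : ℚ⟦X⟧) (hw0 : PowerSeries.constantCoeff w = 0)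
    (hw : (1 - w) ^ N * w = X) (k : ℕ) :
    PowerSeries.coeff k ((1 - w) ^ (N * (k + 1)) * (d⁄dX ℚ) w) = if k = 0 then 1 else 0 := by
  have hwne : w ≠ 0 := by
    intro h
    rw [h, mul_zero] at hw
    have := congrArg (PowerSeries.coeff 1) hw
    simp at this
  have hcc1 : PowerSeries.constantCoeff ((1 - w) ^ N) = 1 := by
    rw [map_pow, map_sub, map_one, hw0, sub_zero, one_pow]
  have hD1 : PowerSeries.constantCoeff ((d⁄dX ℚ) w) = 1 := by
    have h := congrArg (d⁄dX ℚ) hw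
    rw [Derivation.leibniz, derivative_X, smul_eq_mul, smul_eq_mul] at h
    have h2 := congrArg (PowerSeries.constantCoeff) h
    rw [map_add, map_mul, map_mul, hcc1, hw0, zero_mul, add_zero, one_mul, map_one] at h2
    exact h2
  cases k with
  | zero =>
    rw [coeff_zero_eq_constantCoeff, map_mul, hD1, mul_one, map_pow, map_sub, map_one,
      hw0, sub_zero, one_pow, if_pos rfl]
  | succ m =>
    rw [if_neg (Nat.succ_ne_zero m)]
    set k := m + 1 with hk
    set Cs := (1 - w) ^ (N * k) with hCs
    have h1 : w ^ k * Cs = X ^ k := by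
      rw [hCs, pow_mul, mul_comm (w ^ k), ← mul_pow, hw]
    have h4 : (1 - w) ^ (N * (k + 1)) * w ^ (k + 1) = X ^ (k + 1) := by
      rw [pow_mul, ← mul_pow, hw]
    have h2 : w ^ k * (d⁄dX ℚ) Cs + Cs * ((k : ℚ⟦X⟧) * (w ^ m * (d⁄dX ℚ) w))
        = (k : ℚ⟦X⟧) * X ^ m := by
      have h := congrArg (d⁄dX ℚ) h1
      rw [Derivation.leibniz] at h
      simp only [Derivation.leibniz_pow, derivative_X] at h
      simp only [smul_eq_mul, nsmul_eq_mul, hk, Nat.add_sub_cancel, mul_one] at h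
      rw [hk]
      push_cast at h ⊢
      linear_combination h
    have h3 : (k : ℚ⟦X⟧) * Cs - X * (d⁄dX ℚ) Cs
        = (k : ℚ⟦X⟧) * ((1 - w) ^ (N * (k + 1)) * (d⁄dX ℚ) w) := by
      apply mul_left_cancel₀ (pow_ne_zero (k + 1) hwne)
      linear_combination (-(X * w)) * h2
        + ((k : ℚ⟦X⟧) * X * (d⁄dX ℚ) w + (k : ℚ⟦X⟧) * w) * h1
        + (-((k : ℚ⟦X⟧) * (d⁄dX ℚ) w)) * h4
    have h5 := congrArg (PowerSeries.coeff k) h3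
    rw [map_sub, coeff_natCast_mul, coeff_natCast_mul, hk, coeff_succ_X_mul,
      coeff_derivative] at h5
    have h6 : (k : ℚ) * PowerSeries.coeff k ((1 - w) ^ (N * (k + 1)) * (d⁄dX ℚ) w) = 0 := by
      rw [hk]
      push_cast at h5 ⊢
      linear_combination -h5
    have hkne : (k : ℚ) ≠ 0 := by positivity
    exact (mul_eq_zero.mp h6).resolve_left hkne

lemma coeff_A (N : ℕ) (hN : 1 ≤ N) (w : ℚ⟦X⟧) (hw0 : PowerSeries.constantCoeff w = 0)
    (hw : (1 - w) ^ N * w = X) (e : ℕ) :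
    PowerSeries.coeff e ((1 - w) ^ (N - 1) * (d⁄dX ℚ) w)
      = (((N + 1) * e).choose e : ℚ) := by
  classical
  set M := N * e + 1 with hM
  set c : ℕ → ℚ := fun j => ((N * e + j).choose j : ℚ) with hc
  set Pp : Polynomial ℚ := ∑ j ∈ range (e + 1), Polynomial.C (c j) * Polynomial.X ^ j with hPp
  -- coefficients of Pp
  have hPpc : ∀ i ≤ e, Pp.coeff i = c i := by
    intro i hi
    rw [hPp, Polynomial.finset_sum_coeff]
    rw [Finset.sum_eq_single i]
    · simp
    · intro b _ hbi
      simp [Polynomial.coeff_C_mul, Polynomial.coeff_X_pow, Ne.symm hbi]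
    · intro hnotin
      exact absurd (mem_range.2 (Nat.lt_succ_of_le hi)) hnotin
  -- polynomial divisibility
  have hdvd : (Polynomial.X : Polynomial ℚ) ^ (e + 1) ∣
      (1 - Polynomial.X) ^ M * Pp - 1 := by
    rw [Polynomial.X_pow_dvd_iff]
    intro i hi
    have hie : i ≤ e := Nat.lt_succ_iff.mp hi
    have hcoe : ∀ a : ℕ, ((1 - Polynomial.X : Polynomial ℚ) ^ M).coeff a
        = PowerSeries.coeff a ((1 - X : ℚ⟦X⟧) ^ M) := by
      intro a
      have : (((1 - Polynomial.X : Polynomial ℚ) ^ M : Polynomial ℚ) : ℚ⟦X⟧)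
          = (1 - X : ℚ⟦X⟧) ^ M := by
        push_cast [Polynomial.coe_pow, Polynomial.coe_sub, Polynomial.coe_one, Polynomial.coe_X]
        norm_num
      rw [← this, Polynomial.coeff_coe]
    have hprod : ((1 - Polynomial.X) ^ M * Pp).coeff i
        = PowerSeries.coeff i ((1 - X : ℚ⟦X⟧) ^ M
            * PowerSeries.mk (fun j => ((N * e + j).choose j : ℚ))) := by
      rw [Polynomial.coeff_mul, PowerSeries.coeff_mul]
      apply Finset.sum_congr rfl
      rintro ⟨a, b⟩ hab
      rw [HasAntidiagonal.mem_antidiagonal] at hab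
      have hb : b ≤ e := by omega
      rw [hcoe a, hPpc b hb, coeff_mk]
    rw [Polynomial.coeff_sub, hprod, hM, geom_inv (N * e)]
    rcases Nat.eq_zero_or_pos i with rfl | hipos
    · simp
    · rw [PowerSeries.coeff_one, Polynomial.coeff_one]
      simp [Nat.pos_iff_ne_zero.mp hipos]
  obtain ⟨q, hq⟩ := hdvd
  -- apply aeval w
  have haeval : (1 - w) ^ M * (Polynomial.aeval w) Pp - 1 = w ^ (e + 1) * (Polynomial.aeval w) q := by
    have := congrArg (Polynomial.aeval w) hq
    simpa [map_sub, map_mul, map_pow, map_one] using this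
  -- the target series
  set A := (1 - w) ^ (N - 1) * (d⁄dX ℚ) w with hA
  have key : (1 - w) ^ M * (Polynomial.aeval w) Pp * A = A + w ^ (e + 1) * ((Polynomial.aeval w) q * A) := by
    have : (1 - w) ^ M * (Polynomial.aeval w) Pp = 1 + w ^ (e + 1) * (Polynomial.aeval w) q := by
      linear_combination haeval
    rw [this]; ring
  -- coeff e of both sides
  have hXw : (X : ℚ⟦X⟧) ∣ w := X_dvd_iff.mpr hw0
  have hco_corr : PowerSeries.coeff e (w ^ (e + 1) * ((Polynomial.aeval w) q * A)) = 0 := by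
    have : (X : ℚ⟦X⟧) ^ (e + 1) ∣ w ^ (e + 1) * ((Polynomial.aeval w) q * A) :=
      Dvd.dvd.mul_right (pow_dvd_pow_of_dvd hXw (e + 1)) _
    exact PowerSeries.X_pow_dvd_iff.mp this e (Nat.lt_succ_self e)
  -- LHS rewrite
  have hexp : M + (N - 1) = N * (e + 1) := by
    rw [hM, Nat.mul_succ]
    omega
  have hLHS : (1 - w) ^ M * (Polynomial.aeval w) Pp * A
      = ∑ j ∈ range (e + 1), c j • (w ^ j * ((1 - w) ^ (N * (e + 1)) * (d⁄dX ℚ) w)) := by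
    have h1 : (1 - w) ^ M * A = (1 - w) ^ (N * (e + 1)) * (d⁄dX ℚ) w := by
      rw [hA, ← mul_assoc, ← pow_add, hexp]
    calc (1 - w) ^ M * (Polynomial.aeval w) Pp * A
        = (Polynomial.aeval w) Pp * ((1 - w) ^ M * A) := by ring
      _ = (Polynomial.aeval w) Pp * ((1 - w) ^ (N * (e + 1)) * (d⁄dX ℚ) w) := by rw [h1]
      _ = ∑ j ∈ range (e + 1), c j • (w ^ j * ((1 - w) ^ (N * (e + 1)) * (d⁄dX ℚ) w)) := by
          rw [hPp, map_sum, Finset.sum_mul]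
          apply Finset.sum_congr rfl
          intro j _
          rw [map_mul, map_pow, Polynomial.aeval_X, Polynomial.aeval_C]
          rw [Algebra.smul_def]
          ring
  -- coefficient of each summand
  have hterm : ∀ j ≤ e, PowerSeries.coeff e (w ^ j * ((1 - w) ^ (N * (e + 1)) * (d⁄dX ℚ) w))
      = if j = e then 1 else 0 := by
    intro j hj
    have hsplit : (1 - w) ^ (N * (e + 1)) = (1 - w) ^ (N * j) * (1 - w) ^ (N * ((e - j) + 1)) := by
      rw [← pow_add, ← Nat.mul_add]
      congr 2
      omega
    have hXj : w ^ j * (1 - w) ^ (N * j) = X ^ j := by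
      rw [pow_mul, mul_comm (w ^ j), ← mul_pow, hw]
    have : w ^ j * ((1 - w) ^ (N * (e + 1)) * (d⁄dX ℚ) w)
        = X ^ j * ((1 - w) ^ (N * ((e - j) + 1)) * (d⁄dX ℚ) w) := by
      rw [hsplit]
      linear_combination ((1 - w) ^ (N * ((e - j) + 1)) * (d⁄dX ℚ) w) * hXj
    rw [this, coeff_X_pow_mul', if_pos hj, residue N w hw0 hw (e - j)]
    by_cases hje : j = e
    · simp [hje]
    · have : e - j ≠ 0 := by omega
      simp [this, hje]
  -- put it together
  have hsum := congrArg (PowerSeries.coeff e) key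
  rw [map_add, hco_corr, add_zero, hLHS, map_sum] at hsum
  rw [← hsum]
  have hterm2 : ∀ j ∈ range (e + 1), PowerSeries.coeff e
      (c j • (w ^ j * ((1 - w) ^ (N * (e + 1)) * (d⁄dX ℚ) w)))
      = if j = e then c e else 0 := by
    intro j hj
    rw [map_smul, hterm j (Nat.lt_succ_iff.mp (mem_range.mp hj))]
    by_cases hje : j = e <;> simp [hje]
  rw [Finset.sum_congr rfl hterm2, Finset.sum_ite_eq' (range (e + 1)) e (fun _ => c e),
    if_pos (mem_range.2 (Nat.lt_succ_self e)), hc]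
  have : (N + 1) * e = N * e + e := by ring
  rw [this]

lemma uniq_sol (N : ℕ) (f₁ f₂ : ℚ⟦X⟧)
    (h1c : PowerSeries.constantCoeff f₁ = 1) (h2c : PowerSeries.constantCoeff f₂ = 1)
    (e1 : f₁ ^ N - f₁ ^ (N + 1) + X = 0) (e2 : f₂ ^ N - f₂ ^ (N + 1) + X = 0) :
    f₁ = f₂ := by
  set S₁ : ℚ⟦X⟧ := ∑ i ∈ range (N + 1), f₁ ^ i * f₂ ^ (N - i) with hS₁
  set S₂ : ℚ⟦X⟧ := ∑ i ∈ range N, f₁ ^ i * f₂ ^ (N - 1 - i) with hS₂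
  have g1 := geom_sum₂_mul f₁ f₂ (N + 1)
  have g2 := geom_sum₂_mul f₁ f₂ N
  have key : (S₁ - S₂) * (f₁ - f₂) = 0 := by
    have : ∑ i ∈ range (N + 1), f₁ ^ i * f₂ ^ (N + 1 - 1 - i) = S₁ := by
      rw [hS₁]
      apply Finset.sum_congr rfl
      intro i _
      congr 2
    rw [this] at g1
    linear_combination g1 - g2 - e1 + e2
  have hS : PowerSeries.constantCoeff (S₁ - S₂) = 1 := by
    have c1 : PowerSeries.constantCoeff S₁ = N + 1 := by
      rw [hS₁, map_sum]
      have h : ∀ i ∈ range (N + 1), PowerSeries.constantCoeff (f₁ ^ i * f₂ ^ (N - i))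
          = 1 := by
        intro i _
        rw [map_mul, map_pow, map_pow, h1c, h2c, one_pow, one_pow, one_mul]
      rw [Finset.sum_congr rfl h]
      simp
    have c2 : PowerSeries.constantCoeff S₂ = N := by
      rw [hS₂, map_sum]
      have h : ∀ i ∈ range N, PowerSeries.constantCoeff (f₁ ^ i * f₂ ^ (N - 1 - i))
          = 1 := by
        intro i _
        rw [map_mul, map_pow, map_pow, h1c, h2c, one_pow, one_pow, one_mul]
      rw [Finset.sum_congr rfl h]
      simp
    rw [map_sub, c1, c2]
    ring
  have hSne : S₁ - S₂ ≠ 0 := by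
    intro h
    rw [h, map_zero] at hS
    norm_num at hS
  have := mul_eq_zero.mp key
  rcases this with h | h
  · exact absurd h hSne
  · exact sub_eq_zero.mp h

lemma coeff_eq_zero_of_X_pow_dvd {g : ℚ⟦X⟧} {n d : ℕ} (h : (X : ℚ⟦X⟧) ^ n ∣ g) (hd : d < n) :
    PowerSeries.coeff d g = 0 := PowerSeries.X_pow_dvd_iff.mp h d hd

noncomputable def Fit (N : ℕ) (g : ℚ⟦X⟧) : ℚ⟦X⟧ := 1 + X * (g ^ N)⁻¹

noncomputable def cit (N : ℕ) (n : ℕ) : ℚ⟦X⟧ := (Fit N)^[n] 1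

lemma exists_sol (N : ℕ) (hN : 1 ≤ N) :
    ∃ f : ℚ⟦X⟧, PowerSeries.constantCoeff f = 1 ∧ f ^ N - f ^ (N + 1) + X = 0 := by
  classical
  let F : ℚ⟦X⟧ → ℚ⟦X⟧ := Fit N
  let c : ℕ → ℚ⟦X⟧ := cit N
  have hFdef : ∀ g, F g = 1 + X * (g ^ N)⁻¹ := fun g => rfl
  have hc : ∀ n, c (n + 1) = F (c n) := by
    intro n
    exact Function.iterate_succ_apply' (Fit N) n 1
  have hc0 : c 0 = 1 := rfl
  have hcc : ∀ n, PowerSeries.constantCoeff (c n) = 1 := by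
    intro n
    induction n with
    | zero => rw [hc0]; simp
    | succ n _ => rw [hc n, hFdef]; simp
  have hcontract : ∀ (a b : ℚ⟦X⟧) (k : ℕ), PowerSeries.constantCoeff a = 1 →
      PowerSeries.constantCoeff b = 1 → (X : ℚ⟦X⟧) ^ k ∣ a - b →
      (X : ℚ⟦X⟧) ^ (k + 1) ∣ F a - F b := by
    intro a b k ha hb hab
    have hFab : F a - F b = X * ((a ^ N)⁻¹ - (b ^ N)⁻¹) := by
      rw [hFdef a, hFdef b]; ring
    have hane : PowerSeries.constantCoeff (a ^ N) ≠ 0 := by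
      rw [map_pow, ha, one_pow]; norm_num
    have hbne : PowerSeries.constantCoeff (b ^ N) ≠ 0 := by
      rw [map_pow, hb, one_pow]; norm_num
    have h₁ := PowerSeries.mul_inv_cancel (a ^ N) hane
    have h₂ := PowerSeries.mul_inv_cancel (b ^ N) hbne
    have hid : (a ^ N)⁻¹ - (b ^ N)⁻¹ = (a ^ N)⁻¹ * (b ^ N)⁻¹ * (b ^ N - a ^ N) := by
      linear_combination (b ^ N)⁻¹ * h₁ - (a ^ N)⁻¹ * h₂
    have hdvd : (X : ℚ⟦X⟧) ^ k ∣ b ^ N - a ^ N := by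
      have h3 : (X : ℚ⟦X⟧) ^ k ∣ b - a := dvd_sub_comm.mp hab
      have := geom_sum₂_mul b a N
      rw [← this]
      exact Dvd.dvd.mul_left h3 _
    rw [hFab, hid, pow_succ, mul_comm ((X:ℚ⟦X⟧)^k) X]
    exact mul_dvd_mul_left X (Dvd.dvd.mul_left hdvd _)
  have hstep : ∀ n, (X : ℚ⟦X⟧) ^ n ∣ c (n + 1) - c n := by
    intro n
    induction n with
    | zero => exact pow_zero (X : ℚ⟦X⟧) ▸ one_dvd _
    | succ n ih =>
      have h7 := hcontract (c (n + 1)) (c n) n (hcc _) (hcc _) ih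
      rwa [← hc n, ← hc (n + 1)] at h7
  have hchain : ∀ n m, n ≤ m → (X : ℚ⟦X⟧) ^ n ∣ c m - c n := by
    intro n m hnm
    induction m, hnm using Nat.le_induction with
    | base => simp
    | succ m hnm ih =>
      have : c (m + 1) - c n = (c (m + 1) - c m) + (c m - c n) := by ring
      rw [this]
      exact dvd_add (dvd_trans (pow_dvd_pow X hnm) (hstep m)) ih
  set f : ℚ⟦X⟧ := PowerSeries.mk (fun d => PowerSeries.coeff d (c (d + 1))) with hfdef
  have hfc : ∀ n, (X : ℚ⟦X⟧) ^ n ∣ f - c n := by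
    intro n
    rw [PowerSeries.X_pow_dvd_iff]
    intro d hd
    rw [map_sub, hfdef, coeff_mk]
    have h4 : (X : ℚ⟦X⟧) ^ (d + 1) ∣ c n - c (d + 1) := hchain (d + 1) n hd
    have := coeff_eq_zero_of_X_pow_dvd h4 (Nat.lt_succ_self d)
    rw [map_sub] at this
    linarith
  have hccf : PowerSeries.constantCoeff f = 1 := by
    rw [← PowerSeries.coeff_zero_eq_constantCoeff_apply, hfdef, coeff_mk,
      PowerSeries.coeff_zero_eq_constantCoeff_apply, hcc]
  have hzero : ∀ g : ℚ⟦X⟧, (∀ n, (X : ℚ⟦X⟧) ^ n ∣ g) → g = 0 := by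
    intro g hg
    ext d
    rw [map_zero]
    exact coeff_eq_zero_of_X_pow_dvd (hg (d + 1)) (Nat.lt_succ_self d)
  have hFf : F f = f := by
    rw [← sub_eq_zero]
    apply hzero
    intro n
    cases n with
    | zero => exact one_dvd _
    | succ n =>
      have h5 : (X : ℚ⟦X⟧) ^ (n + 1) ∣ F f - F (c n) :=
        hcontract f (c n) n hccf (hcc n) (hfc n)
      have h6 : (X : ℚ⟦X⟧) ^ (n + 1) ∣ f - c (n + 1) := hfc (n + 1)
      have h8 : c (n + 1) - F (c n) = 0 := by rw [hc n, sub_self]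
      have : F f - f = (F f - F (c n)) - (f - c (n + 1)) - (c (n + 1) - F (c n)) := by ring
      rw [this, h8, sub_zero]
      exact dvd_sub h5 h6
  refine ⟨f, hccf, ?_⟩
  have hfeq : f = 1 + X * (f ^ N)⁻¹ := hFf.symm.trans (hFdef f)
  have hfne : PowerSeries.constantCoeff (f ^ N) ≠ 0 := by
    rw [map_pow, hccf, one_pow]; norm_num
  have hmulinv := PowerSeries.mul_inv_cancel (f ^ N) hfne
  linear_combination (-(f ^ N)) * hfeq + (-X) * hmulinv

/- STATEMENT 8: For `N ≥ 1` there is a unique `f ∈ ℚ[[z]]` with `f(0) = 1` and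
`f^N - f^(N+1) + z = 0`, and it satisfies
`f(-z)^N = 1 - Σ_{d≥1} (N/d) C((N+1)(d-1), d-1) z^d`. -/

/-- `G(z) = Σ_{d≥1} (N/d) C((N+1)(d-1), d-1) z^d`, the Fuss–Catalan generating series. -/
noncomputable def Gs (N : ℕ) : PowerSeries ℚ :=
  PowerSeries.mk fun d =>
    if d = 0 then 0 else (N : ℚ) / (d : ℚ) * (((N + 1) * (d - 1)).choose (d - 1) : ℚ)

lemma value (N : ℕ) (hN : 1 ≤ N) (f : ℚ⟦X⟧) (hcf : PowerSeries.constantCoeff f = 1)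
    (he : f ^ N - f ^ (N + 1) + X = 0) :
    (PowerSeries.rescale (-1) f) ^ N = 1 - Gs N := by
  set h : ℚ⟦X⟧ := PowerSeries.rescale (-1) f with hh
  have hch : PowerSeries.constantCoeff h = 1 := by
    rw [hh, ← PowerSeries.coeff_zero_eq_constantCoeff_apply, coeff_rescale]
    simpa using hcf
  have heq : h ^ N - h ^ (N + 1) = X := by
    have h0 := congrArg (PowerSeries.rescale (-1 : ℚ)) he
    rw [map_add, map_sub, map_pow, map_pow, rescale_neg_one_X, map_zero] at h0
    linear_combination h0
  set w : ℚ⟦X⟧ := 1 - h with hwdef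
  have h1w : 1 - w = h := by rw [hwdef]; ring
  have hw0 : PowerSeries.constantCoeff w = 0 := by
    rw [hwdef, map_sub, map_one, hch, sub_self]
  have hw : (1 - w) ^ N * w = X := by
    rw [h1w, hwdef]
    linear_combination heq
  have hder : (d⁄dX ℚ) ((1 - w) ^ N)
      = -((N : ℚ⟦X⟧) * ((1 - w) ^ (N - 1) * (d⁄dX ℚ) w)) := by
    have hd1 : (d⁄dX ℚ) (1 - w) = -(d⁄dX ℚ) w := by
      rw [map_sub, Derivation.map_one_eq_zero, zero_sub]
    rw [Derivation.leibniz_pow, hd1]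
    simp only [smul_eq_mul, nsmul_eq_mul]
    ring
  ext d
  cases d with
  | zero =>
    rw [PowerSeries.coeff_zero_eq_constantCoeff_apply,
      PowerSeries.coeff_zero_eq_constantCoeff_apply, map_pow, hch, one_pow,
      map_sub, map_one, ← PowerSeries.coeff_zero_eq_constantCoeff_apply (Gs N),
      Gs, coeff_mk, if_pos rfl, sub_zero]
  | succ m =>
    have hA := coeff_A N hN w hw0 hw m
    have hcd := coeff_derivative ((1 - w) ^ N) m
    have hDm := congrArg (PowerSeries.coeff m) hder
    rw [hcd, map_neg, coeff_natCast_mul, hA] at hDm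
    have hgoal : PowerSeries.coeff (m + 1) ((1 - w) ^ N)
        = -((N : ℚ) / (m + 1 : ℚ) * (((N + 1) * m).choose m : ℚ)) := by
      have hne : ((m : ℚ) + 1) ≠ 0 := by positivity
      field_simp
      linear_combination hDm
    rw [h1w] at hgoal
    rw [map_sub, hgoal, Gs, coeff_mk, if_neg (Nat.succ_ne_zero m), PowerSeries.coeff_one,
      if_neg (Nat.succ_ne_zero m), Nat.succ_sub_one]
    push_cast
    ring

theorem exists_unique_f_and_value (N : ℕ) (hN : 1 ≤ N) :
    (∃! f : PowerSeries ℚ,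
        PowerSeries.constantCoeff f = 1 ∧ f ^ N - f ^ (N + 1) + PowerSeries.X = 0) ∧
      ∀ f : PowerSeries ℚ, PowerSeries.constantCoeff f = 1 →
        f ^ N - f ^ (N + 1) + PowerSeries.X = 0 →
          (PowerSeries.rescale (-1) f) ^ N = 1 - Gs N := by
  constructor
  · obtain ⟨f, hf1, hf2⟩ := exists_sol N hN
    exact ⟨f, ⟨hf1, hf2⟩, fun g hg => uniq_sol N g f hg.1 hf1 hg.2 hf2⟩
  · intro f hcf he
    exact value N hN f hcf he
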